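/- Let a sequence of 2n symbols from {L, R} contain exactly n L's and n R's, arranged cyclically, and define the associated running count sequence r_1, ..., r_{2n} by r_i = r_{i-1} + 1 if the i-th symbol is L and r_i = r_{i-1} - 1 if the i-th symbol is R (indices cyclic). Suppose the maximum value of the r_i is M, the minimum is m, and r_{2n} = m. Then the sum r_1 + ... + r_{2n} is at most (M+m)(M-m) + (2M-1)(n-M+m). -/

import Mathlib

open Finset

/-- Telescoping identity for truncated linear terms. -/
lemma rcsl_tel (N : ℕ) (c : ℤ) :
    ∑ j ∈ Finset.range N, (max 0 (c - 4*(j:ℤ)) - max 0 (c - 4*(j:ℤ) - 4))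
      = max 0 c - max 0 (c - 4*(N:ℤ)) := by
  induction N with
  | zero => simp
  | succ N ih =>
    rw [Finset.sum_range_succ, ih]
    have e : c - 4*((N+1:ℕ):ℤ) = c - 4*(N:ℤ) - 4 := by push_cast; ring
    rw [e]
    ring

/-- Arithmetic lemma: sum of truncated linear terms dominates `d(d-1)`. -/
lemma rcsl_arith_aux (n : ℕ) : ∀ d : ℕ, d ≤ n →
    (d:ℤ)*((d:ℤ)-1) ≤ ∑ j ∈ Finset.range n,
      (max 0 (2*(d:ℤ)-4*(j:ℤ)-4) + max 0 (2*(d:ℤ)-4*(j:ℤ)-2)) := by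
  intro d
  induction d with
  | zero =>
    intro _
    simp only [Nat.cast_zero]
    have h : (0:ℤ) ≤ ∑ j ∈ Finset.range n,
        (max 0 (2*(0:ℤ)-4*(j:ℤ)-4) + max 0 (2*(0:ℤ)-4*(j:ℤ)-2)) := by
      apply Finset.sum_nonneg
      intro j _
      have h1 := le_max_left (0:ℤ) (2*(0:ℤ)-4*(j:ℤ)-4)
      have h2 := le_max_left (0:ℤ) (2*(0:ℤ)-4*(j:ℤ)-2)
      linarith
    linarith
  | succ d ih =>
    intro hdn
    have hd : d ≤ n := Nat.le_of_succ_le hdn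
    have heq : ∑ j ∈ Finset.range n,
        (max 0 (2*((d+1:ℕ):ℤ)-4*(j:ℤ)-4) + max 0 (2*((d+1:ℕ):ℤ)-4*(j:ℤ)-2))
      = ∑ j ∈ Finset.range n,
        ((max 0 (2*(d:ℤ)-4*(j:ℤ)-4) + max 0 (2*(d:ℤ)-4*(j:ℤ)-2))
          + (max 0 (2*(d:ℤ)-4*(j:ℤ)) - max 0 (2*(d:ℤ)-4*(j:ℤ)-4))) := by
      apply Finset.sum_congr rfl
      intro j _
      have e1 : 2*((d+1:ℕ):ℤ)-4*(j:ℤ)-4 = 2*(d:ℤ)-4*(j:ℤ)-2 := by push_cast; ring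
      have e2 : 2*((d+1:ℕ):ℤ)-4*(j:ℤ)-2 = 2*(d:ℤ)-4*(j:ℤ) := by push_cast; ring
      rw [e1, e2]
      ring
    rw [heq, Finset.sum_add_distrib, rcsl_tel n (2*(d:ℤ))]
    have hA : max (0:ℤ) (2*(d:ℤ)) = 2*(d:ℤ) := max_eq_right (by positivity)
    have hB : max (0:ℤ) (2*(d:ℤ) - 4*(n:ℤ)) = 0 := by
      apply max_eq_left
      have : (d:ℤ)+1 ≤ (n:ℤ) := by exact_mod_cast hdn
      linarith
    rw [hA, hB]
    have hih := ih hd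
    push_cast
    push_cast at hih
    linarith

/-- Splitting a sum over `range (2n)` into pairs. -/
lemma rcsl_sum_pairs (g : ℕ → ℤ) (n : ℕ) :
    ∑ i ∈ Finset.range (2*n), g i = ∑ j ∈ Finset.range n, (g (2*j) + g (2*j+1)) := by
  induction n with
  | zero => simp
  | succ n ih =>
    have h2 : 2*(n+1) = (2*n+1)+1 := by ring
    rw [h2, Finset.sum_range_succ, Finset.sum_range_succ, ih, Finset.sum_range_succ]
    ring

/-- Proposition 4.1 (upper bound): let `q : ℕ → Bool` describe a cyclic
LR-sequence of length `2n` (`q i = true` meaning the `i`-th symbol is `L`),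
with exactly `n` L's and `n` R's.  Let `r` be the associated running count
sequence: `r i = r (i-1) + 1` at an `L` and `r i = r (i-1) - 1` at an `R`,
cyclically consistent (`r 0 = r (2n)`).  If `M` is the maximum and `m` the
minimum of the `r i` over `1 ≤ i ≤ 2n`, and `r (2n) = m`, then
`r 1 + ⋯ + r (2n) ≤ (M+m)(M-m) + (2M-1)(n-M+m)`. -/
theorem running_count_sum_le (n : ℕ) (hn : 1 ≤ n) (q : ℕ → Bool) (r : ℕ → ℤ)
    (M m : ℤ)
    (hq : ((Finset.Icc 1 (2*n)).filter fun i => q i = true).card = n)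
    (hstep : ∀ i ∈ Finset.Icc 1 (2*n), r i = r (i-1) + if q i then 1 else -1)
    (hcyc : r 0 = r (2*n))
    (hMub : ∀ i ∈ Finset.Icc 1 (2*n), r i ≤ M)
    (hMmem : ∃ i ∈ Finset.Icc 1 (2*n), r i = M)
    (hmlb : ∀ i ∈ Finset.Icc 1 (2*n), m ≤ r i)
    (hmmem : ∃ i ∈ Finset.Icc 1 (2*n), r i = m)
    (hend : r (2*n) = m) :
    ∑ i ∈ Finset.Icc 1 (2*n), r i ≤ (M+m)*(M-m) + (2*M-1)*((n:ℤ)-M+m) := by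
  obtain ⟨iM, hiMmem, hiM⟩ := hMmem
  have hr0 : r 0 = m := hcyc.trans hend
  have hmM : m ≤ M := by
    have h1 := hmlb iM hiMmem
    linarith [hiM ▸ h1]
  -- telescoping formula
  have tel : ∀ k, k ≤ 2*n → r k = r 0 + ∑ i ∈ Finset.Icc 1 k, (if q i then (1:ℤ) else -1) := by
    intro k
    induction k with
    | zero => intro _; simp
    | succ k ihk =>
      intro hk
      have hmem : k+1 ∈ Finset.Icc 1 (2*n) := Finset.mem_Icc.mpr ⟨by omega, hk⟩
      rw [Finset.sum_Icc_succ_top (by omega : 1 ≤ k+1), hstep (k+1) hmem]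
      simp only [Nat.add_sub_cancel]
      rw [ihk (by omega)]
      ring
  -- M - m ≤ n
  have hDn : M - m ≤ (n:ℤ) := by
    have hiM2 := (Finset.mem_Icc.mp hiMmem).2
    have h1 := tel iM hiM2
    have h2 : ∑ i ∈ Finset.Icc 1 iM, (if q i then (1:ℤ) else -1)
        ≤ ∑ i ∈ Finset.Icc 1 iM, (if q i = true then (1:ℤ) else 0) := by
      apply Finset.sum_le_sum
      intro i _
      by_cases h : q i = true <;> simp [h]
    have h3 : ∑ i ∈ Finset.Icc 1 iM, (if q i = true then (1:ℤ) else 0)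
        = (((Finset.Icc 1 iM).filter (fun i => q i = true)).card : ℤ) := by
      rw [Finset.sum_boole]
    have h4 : ((Finset.Icc 1 iM).filter (fun i => q i = true)).card
        ≤ ((Finset.Icc 1 (2*n)).filter (fun i => q i = true)).card :=
      Finset.card_le_card (Finset.filter_subset_filter _ (Finset.Icc_subset_Icc_right hiM2))
    rw [hq] at h4
    have h4' : (((Finset.Icc 1 iM).filter (fun i => q i = true)).card : ℤ) ≤ (n:ℤ) := by
      exact_mod_cast h4
    rw [hr0, hiM] at h1
    linarith
  -- forward bound : M - m - i ≤ M - r i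
  have fwd : ∀ i, i ≤ 2*n → (M - m) - (i:ℤ) ≤ M - r i := by
    intro i
    induction i with
    | zero => intro _; simp [hr0]
    | succ i ihi =>
      intro h
      have hmem : i+1 ∈ Finset.Icc 1 (2*n) := Finset.mem_Icc.mpr ⟨by omega, h⟩
      have hs := hstep (i+1) hmem
      simp only [Nat.add_sub_cancel] at hs
      have hup : r (i+1) ≤ r i + 1 := by
        rw [hs]; split <;> linarith
      have := ihi (by omega)
      push_cast
      linarith
  -- backward bound
  have bwdk : ∀ k, ∀ i, i + k = 2*n → (M - m) - (k:ℤ) ≤ M - r i := by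
    intro k
    induction k with
    | zero =>
      intro i h
      have hi : i = 2*n := by omega
      subst hi
      simp [hend]
    | succ k ihk =>
      intro i h
      have hmem : i+1 ∈ Finset.Icc 1 (2*n) := Finset.mem_Icc.mpr ⟨by omega, by omega⟩
      have hs := hstep (i+1) hmem
      simp only [Nat.add_sub_cancel] at hs
      have hdown : r i ≤ r (i+1) + 1 := by
        rw [hs]; split <;> linarith
      have := ihk (i+1) (by omega)
      push_cast
      linarith
  have bwd : ∀ i, i ≤ 2*n → (M - m) - (2*(n:ℤ) - (i:ℤ)) ≤ M - r i := by
    intro i hi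
    have h := bwdk (2*n - i) i (by omega)
    have hc : ((2*n - i : ℕ) : ℤ) = 2*(n:ℤ) - (i:ℤ) := by
      push_cast [Nat.cast_sub hi]; ring
    rw [hc] at h
    exact h
  -- pairwise bound
  have pair : ∀ j ∈ Finset.range n,
      1 + max 0 (2*(M-m) - 4*(j:ℤ) - 4) + max 0 (2*(M-m) - 4*(n:ℤ) + 4*(j:ℤ) + 2)
        ≤ (M - r (2*j+1)) + (M - r (2*j+2)) := by
    intro j hj
    have hj' : j < n := Finset.mem_range.mp hj
    have m1 : 2*j+1 ∈ Finset.Icc 1 (2*n) := Finset.mem_Icc.mpr ⟨by omega, by omega⟩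
    have m2 : 2*j+2 ∈ Finset.Icc 1 (2*n) := Finset.mem_Icc.mpr ⟨by omega, by omega⟩
    have nn1 : 0 ≤ M - r (2*j+1) := by have := hMub _ m1; linarith
    have nn2 : 0 ≤ M - r (2*j+2) := by have := hMub _ m2; linarith
    have hs := hstep (2*j+2) m2
    have hidx : 2*j+2-1 = 2*j+1 := by omega
    rw [hidx] at hs
    have hone : 1 ≤ (M - r (2*j+1)) + (M - r (2*j+2)) := by
      by_cases hqi : q (2*j+2) = true <;> simp [hqi] at hs <;> linarith
    have hf1 := fwd (2*j+1) (by omega)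
    have hf2 := fwd (2*j+2) (by omega)
    have hb1 := bwd (2*j+1) (by omega)
    have hb2 := bwd (2*j+2) (by omega)
    push_cast at hf1 hf2 hb1 hb2
    rcases le_total (2*(M-m) - 4*(j:ℤ) - 4) 0 with h1 | h1
    · rw [max_eq_left h1]
      rcases le_total (2*(M-m) - 4*(n:ℤ) + 4*(j:ℤ) + 2) 0 with h2 | h2
      · rw [max_eq_left h2]; linarith
      · rw [max_eq_right h2]; linarith
    · rw [max_eq_right h1, max_eq_left (by linarith)]
      linarith
  -- rewrite the sum over pairs
  have hre : ∑ i ∈ Finset.Icc 1 (2*n), (M - r i)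
      = ∑ j ∈ Finset.range n, ((M - r (2*j+1)) + (M - r (2*j+2))) := by
    rw [← Finset.Ico_add_one_right_eq_Icc, Finset.sum_Ico_eq_sum_range]
    have h1 : 2*n + 1 - 1 = 2*n := by omega
    rw [h1, rcsl_sum_pairs (fun i => M - r (1+i)) n]
    apply Finset.sum_congr rfl
    intro j _
    show (M - r (1+2*j)) + (M - r (1+(2*j+1))) = (M - r (2*j+1)) + (M - r (2*j+2))
    have e1 : 1 + 2*j = 2*j+1 := by omega
    have e2 : 1 + (2*j+1) = 2*j+2 := by omega
    rw [e1, e2]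
  -- main inequality on the complement sum
  set d : ℕ := (M - m).toNat with hdd
  have hdcast : (d:ℤ) = M - m := Int.toNat_of_nonneg (by linarith)
  have hdn2 : d ≤ n := by omega
  have harith := rcsl_arith_aux n d hdn2
  have hrefl : ∑ j ∈ Finset.range n, max 0 (2*(M-m) - 4*(n:ℤ) + 4*(j:ℤ) + 2)
      = ∑ j ∈ Finset.range n, max 0 (2*(M-m) - 4*(j:ℤ) - 2) := by
    rw [← Finset.sum_range_reflect (fun j : ℕ => max 0 (2*(M-m) - 4*(j:ℤ) - 2)) n]
    apply Finset.sum_congr rfl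
    intro j hj
    have hj' : j < n := Finset.mem_range.mp hj
    show max 0 (2*(M-m) - 4*(n:ℤ) + 4*(j:ℤ) + 2)
        = max 0 (2*(M-m) - 4*((n-1-j:ℕ):ℤ) - 2)
    congr 1
    omega
  have hS : (n:ℤ) + (M-m)*((M-m)-1) ≤ ∑ i ∈ Finset.Icc 1 (2*n), (M - r i) := by
    rw [hre]
    have hps := Finset.sum_le_sum pair
    rw [Finset.sum_add_distrib, Finset.sum_add_distrib, Finset.sum_const,
      Finset.card_range, hrefl] at hps
    rw [hdcast] at harith
    have hcomb : ∑ j ∈ Finset.range n,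
        (max 0 (2*(M-m)-4*(j:ℤ)-4) + max 0 (2*(M-m)-4*(j:ℤ)-2))
        = (∑ j ∈ Finset.range n, max 0 (2*(M-m)-4*(j:ℤ)-4))
          + ∑ j ∈ Finset.range n, max 0 (2*(M-m)-4*(j:ℤ)-2) := Finset.sum_add_distrib
    rw [hcomb] at harith
    simp only [nsmul_eq_mul, mul_one] at hps
    linarith
  -- conclude
  have hsplit : ∑ i ∈ Finset.Icc 1 (2*n), (M - r i)
      = (2*(n:ℤ))*M - ∑ i ∈ Finset.Icc 1 (2*n), r i := by
    rw [Finset.sum_sub_distrib, Finset.sum_const, Nat.card_Icc]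
    have h1 : 2*n + 1 - 1 = 2*n := by omega
    rw [h1]
    ring
  rw [hsplit] at hS
  nlinarith [hS, hmM, hDn]
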